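/- Fix a nonzero complex number ℏ and complex numbers δ, δ′, c, and on holomorphic functions f of (u,v) ∈ ℂ² define the first-order differential operators L_u f = u f + (iℏ/2)(δ ∂_u f + (c−1) ∂_v f), L_v f = v f + (iℏ/2)((c+1) ∂_u f + δ′ ∂_v f), R_u f = u f + (iℏ/2)(δ ∂_u f + (c+1) ∂_v f), R_v f = v f + (iℏ/2)((c−1) ∂_u f + δ′ ∂_v f). Assume (1+c)² ≠ δδ′ and (1−c)² ≠ δδ′ and set ϖ₀₀(u,v) = exp( (1/(iℏ))·(δ′u² − 2(1+c)uv + δv²)/((1+c)² − δδ′) ) and ϖ̄₀₀(u,v) = exp( (1/(iℏ))·(δ′u² + 2(1−c)uv + δv²)/((1−c)² − δδ′) ). Then R_u(R_v ϖ₀₀) = iℏ·ϖ₀₀ and L_u(L_v ϖ̄₀₀) = −iℏ·ϖ̄₀₀; together with R_u ϖ₀₀ = 0 and L_u ϖ̄₀₀ = 0 this expresses the eigenvalue identities ϖ₀₀ ∗ (1/(iℏ))u∘v = ½ ϖ₀₀ and (1/(iℏ))u∘v ∗ ϖ̄₀₀ = −½ ϖ̄₀₀. -/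

import Mathlib

open Complex

lemma quadDeriv (a b k x : ℂ) : HasDerivAt (fun t : ℂ => a*t^2 + b*t + k) (2*a*x + b) x := by
  have h := (((hasDerivAt_pow 2 x).const_mul a).add ((hasDerivAt_id x).const_mul b)).add_const k
  convert h using 1 <;> first | rfl | (push_cast; ring)

lemma expQuadDeriv (a b k x : ℂ) :
    HasDerivAt (fun t : ℂ => Complex.exp (a*t^2+b*t+k))
      ((2*a*x+b) * Complex.exp (a*x^2+b*x+k)) x := by
  have h := (quadDeriv a b k x).cexp
  convert h using 1 <;> first | rfl | ring

lemma hasDerivAt_of_exp_quad (f : ℂ → ℂ) (a b k x : ℂ)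
    (hf : ∀ t, f t = Complex.exp (a*t^2+b*t+k)) :
    HasDerivAt f ((2*a*x+b) * f x) x := by
  have h : f = fun t => Complex.exp (a*t^2+b*t+k) := funext hf
  rw [h]
  exact expQuadDeriv a b k x

lemma hasDerivAt_linmul (f : ℂ → ℂ) (p q d x : ℂ) (hf : HasDerivAt f d x) :
    HasDerivAt (fun t => (p*t+q) * f t) (p * f x + (p*x+q)*d) x := by
  have hl : HasDerivAt (fun t : ℂ => p*t+q) p x := by
    simpa using ((hasDerivAt_id x).const_mul p).add_const q
  exact hl.mul hf


/-- `K`-ordered expression of left ∗-multiplication by `u`. -/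
noncomputable def Lu (ℏ δ δ' c : ℂ) (f : ℂ → ℂ → ℂ) (u v : ℂ) : ℂ :=
  u * f u v + (Complex.I * ℏ / 2) *
    (δ * deriv (fun x => f x v) u + (c - 1) * deriv (fun y => f u y) v)

/-- `K`-ordered expression of left ∗-multiplication by `v`. -/
noncomputable def Lv (ℏ δ δ' c : ℂ) (f : ℂ → ℂ → ℂ) (u v : ℂ) : ℂ :=
  v * f u v + (Complex.I * ℏ / 2) *
    ((c + 1) * deriv (fun x => f x v) u + δ' * deriv (fun y => f u y) v)

/-- `K`-ordered expression of right ∗-multiplication by `u`. -/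
noncomputable def Ru (ℏ δ δ' c : ℂ) (f : ℂ → ℂ → ℂ) (u v : ℂ) : ℂ :=
  u * f u v + (Complex.I * ℏ / 2) *
    (δ * deriv (fun x => f x v) u + (c + 1) * deriv (fun y => f u y) v)

/-- `K`-ordered expression of right ∗-multiplication by `v`. -/
noncomputable def Rv (ℏ δ δ' c : ℂ) (f : ℂ → ℂ → ℂ) (u v : ℂ) : ℂ :=
  v * f u v + (Complex.I * ℏ / 2) *
    ((c - 1) * deriv (fun x => f x v) u + δ' * deriv (fun y => f u y) v)

set_option maxHeartbeats 1000000 in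
/-- For the `K`-ordered expressions `ϖ₀₀` and `ϖ̄₀₀` of the vacuum and bar-vacuum:
`R_u(R_v ϖ₀₀) = iℏ·ϖ₀₀` and `L_u(L_v ϖ̄₀₀) = −iℏ·ϖ̄₀₀`; together with `R_u ϖ₀₀ = 0` and
`L_u ϖ̄₀₀ = 0` these express the eigenvalue identities
`ϖ₀₀ ∗ (1/(iℏ))u∘v = ½ϖ₀₀` and `(1/(iℏ))u∘v ∗ ϖ̄₀₀ = −½ϖ̄₀₀`. -/
theorem statement7 (ℏ δ δ' c : ℂ) (hℏ : ℏ ≠ 0)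
    (h1 : (1 + c) ^ 2 ≠ δ * δ') (h2 : (1 - c) ^ 2 ≠ δ * δ')
    (ϖ ϖbar : ℂ → ℂ → ℂ)
    (hϖ : ∀ u v, ϖ u v = exp ((1 / (Complex.I * ℏ)) *
      (δ' * u ^ 2 - 2 * (1 + c) * u * v + δ * v ^ 2) / ((1 + c) ^ 2 - δ * δ')))
    (hϖbar : ∀ u v, ϖbar u v = exp ((1 / (Complex.I * ℏ)) *
      (δ' * u ^ 2 + 2 * (1 - c) * u * v + δ * v ^ 2) / ((1 - c) ^ 2 - δ * δ'))) :
    (∀ u v : ℂ, Ru ℏ δ δ' c (fun x y => Rv ℏ δ δ' c ϖ x y) u v =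
      Complex.I * ℏ * ϖ u v) ∧
    (∀ u v : ℂ, Lu ℏ δ δ' c (fun x y => Lv ℏ δ δ' c ϖbar x y) u v =
      -(Complex.I * ℏ) * ϖbar u v) ∧
    (∀ u v : ℂ, Ru ℏ δ δ' c ϖ u v = 0) ∧
    (∀ u v : ℂ, Lu ℏ δ δ' c ϖbar u v = 0) := by
  have hI : Complex.I ≠ 0 := Complex.I_ne_zero
  have hIℏ : Complex.I * ℏ ≠ 0 := mul_ne_zero hI hℏ
  set D1 := (1 + c) ^ 2 - δ * δ' with hD1def
  set D2 := (1 - c) ^ 2 - δ * δ' with hD2def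
  have hD1 : D1 ≠ 0 := sub_ne_zero_of_ne h1
  have hD2 : D2 ≠ 0 := sub_ne_zero_of_ne h2
  -- derivative of ϖ in first variable
  have HXa : ∀ u v : ℂ, HasDerivAt (fun x => ϖ x v)
      ((2*(1/(Complex.I*ℏ)*δ'/D1)*u + 1/(Complex.I*ℏ)*(-2*(1+c)*v)/D1) * ϖ u v) u := by
    intro u v
    exact hasDerivAt_of_exp_quad _ _ _ (1/(Complex.I*ℏ)*(δ*v^2)/D1) u
      (fun t => by rw [hϖ]; congr 1; ring)
  have HYa : ∀ u v : ℂ, HasDerivAt (fun y => ϖ u y)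
      ((2*(1/(Complex.I*ℏ)*δ/D1)*v + 1/(Complex.I*ℏ)*(-2*(1+c)*u)/D1) * ϖ u v) v := by
    intro u v
    exact hasDerivAt_of_exp_quad _ _ _ (1/(Complex.I*ℏ)*(δ'*u^2)/D1) v
      (fun t => by rw [hϖ]; congr 1; ring)
  have HXb : ∀ u v : ℂ, HasDerivAt (fun x => ϖbar x v)
      ((2*(1/(Complex.I*ℏ)*δ'/D2)*u + 1/(Complex.I*ℏ)*(2*(1-c)*v)/D2) * ϖbar u v) u := by
    intro u v
    exact hasDerivAt_of_exp_quad _ _ _ (1/(Complex.I*ℏ)*(δ*v^2)/D2) u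
      (fun t => by rw [hϖbar]; congr 1; ring)
  have HYb : ∀ u v : ℂ, HasDerivAt (fun y => ϖbar u y)
      ((2*(1/(Complex.I*ℏ)*δ/D2)*v + 1/(Complex.I*ℏ)*(2*(1-c)*u)/D2) * ϖbar u v) v := by
    intro u v
    exact hasDerivAt_of_exp_quad _ _ _ (1/(Complex.I*ℏ)*(δ'*u^2)/D2) v
      (fun t => by rw [hϖbar]; congr 1; ring)
  have hRvEq : ∀ u v : ℂ, Rv ℏ δ δ' c ϖ u v = ((-2*δ'/D1)*u + 2*(1+c)/D1*v) * ϖ u v := by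
    intro u v
    unfold Rv
    rw [(HXa u v).deriv, (HYa u v).deriv]
    field_simp
    ring
  have hLvEq : ∀ u v : ℂ, Lv ℏ δ δ' c ϖbar u v = ((2*δ'/D2)*u + 2*(1-c)/D2*v) * ϖbar u v := by
    intro u v
    unfold Lv
    rw [(HXb u v).deriv, (HYb u v).deriv]
    field_simp
    ring
  have hRu0 : ∀ u v : ℂ, Ru ℏ δ δ' c ϖ u v = 0 := by
    intro u v
    unfold Ru
    rw [(HXa u v).deriv, (HYa u v).deriv]
    field_simp
    ring
  have hLu0 : ∀ u v : ℂ, Lu ℏ δ δ' c ϖbar u v = 0 := by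
    intro u v
    unfold Lu
    rw [(HXb u v).deriv, (HYb u v).deriv]
    field_simp
    ring
  refine ⟨?_, ?_, hRu0, hLu0⟩
  · intro u v
    have hz : u * ϖ u v + (Complex.I * ℏ / 2) *
        (δ * ((2*(1/(Complex.I*ℏ)*δ'/D1)*u + 1/(Complex.I*ℏ)*(-2*(1+c)*v)/D1) * ϖ u v)
         + (c + 1) * ((2*(1/(Complex.I*ℏ)*δ/D1)*v + 1/(Complex.I*ℏ)*(-2*(1+c)*u)/D1) * ϖ u v)) = 0 := by
      have h := hRu0 u v
      unfold Ru at h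
      rwa [(HXa u v).deriv, (HYa u v).deriv] at h
    have hsmall : (Complex.I*ℏ/2)*(δ*(-2*δ'/D1) + (c+1)*(2*(1+c)/D1)) * ϖ u v
        = Complex.I*ℏ*ϖ u v := by
      rw [hD1def]
      field_simp
      ring
    have e1 : (fun x => Rv ℏ δ δ' c ϖ x v)
        = fun t => ((-2*δ'/D1)*t + 2*(1+c)/D1*v) * ϖ t v := funext fun t => hRvEq t v
    have e2 : (fun y => Rv ℏ δ δ' c ϖ u y)
        = fun t => ((2*(1+c)/D1)*t + (-2*δ'/D1*u)) * ϖ u t :=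
      funext fun t => by rw [hRvEq]; ring
    have d1 : deriv (fun x => Rv ℏ δ δ' c ϖ x v) u
        = (-2*δ'/D1) * ϖ u v + ((-2*δ'/D1)*u + 2*(1+c)/D1*v) *
          ((2*(1/(Complex.I*ℏ)*δ'/D1)*u + 1/(Complex.I*ℏ)*(-2*(1+c)*v)/D1) * ϖ u v) := by
      rw [e1]
      exact (hasDerivAt_linmul _ _ _ _ u (HXa u v)).deriv
    have d2 : deriv (fun y => Rv ℏ δ δ' c ϖ u y) v
        = (2*(1+c)/D1) * ϖ u v + ((2*(1+c)/D1)*v + (-2*δ'/D1*u)) *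
          ((2*(1/(Complex.I*ℏ)*δ/D1)*v + 1/(Complex.I*ℏ)*(-2*(1+c)*u)/D1) * ϖ u v) := by
      rw [e2]
      exact (hasDerivAt_linmul _ _ _ _ v (HYa u v)).deriv
    simp only [Ru]
    rw [d1, d2, hRvEq u v]
    linear_combination ((-2*δ'/D1)*u + 2*(1+c)/D1*v) * hz + hsmall
  · intro u v
    have hz : u * ϖbar u v + (Complex.I * ℏ / 2) *
        (δ * ((2*(1/(Complex.I*ℏ)*δ'/D2)*u + 1/(Complex.I*ℏ)*(2*(1-c)*v)/D2) * ϖbar u v)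
         + (c - 1) * ((2*(1/(Complex.I*ℏ)*δ/D2)*v + 1/(Complex.I*ℏ)*(2*(1-c)*u)/D2) * ϖbar u v)) = 0 := by
      have h := hLu0 u v
      unfold Lu at h
      rwa [(HXb u v).deriv, (HYb u v).deriv] at h
    have hsmall : (Complex.I*ℏ/2)*(δ*(2*δ'/D2) + (c-1)*(2*(1-c)/D2)) * ϖbar u v
        = -(Complex.I*ℏ)*ϖbar u v := by
      rw [hD2def]
      field_simp
      ring
    have e1 : (fun x => Lv ℏ δ δ' c ϖbar x v)
        = fun t => ((2*δ'/D2)*t + 2*(1-c)/D2*v) * ϖbar t v := funext fun t => hLvEq t v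
    have e2 : (fun y => Lv ℏ δ δ' c ϖbar u y)
        = fun t => ((2*(1-c)/D2)*t + (2*δ'/D2*u)) * ϖbar u t :=
      funext fun t => by rw [hLvEq]; ring
    have d1 : deriv (fun x => Lv ℏ δ δ' c ϖbar x v) u
        = (2*δ'/D2) * ϖbar u v + ((2*δ'/D2)*u + 2*(1-c)/D2*v) *
          ((2*(1/(Complex.I*ℏ)*δ'/D2)*u + 1/(Complex.I*ℏ)*(2*(1-c)*v)/D2) * ϖbar u v) := by
      rw [e1]
      exact (hasDerivAt_linmul _ _ _ _ u (HXb u v)).deriv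
    have d2 : deriv (fun y => Lv ℏ δ δ' c ϖbar u y) v
        = (2*(1-c)/D2) * ϖbar u v + ((2*(1-c)/D2)*v + (2*δ'/D2*u)) *
          ((2*(1/(Complex.I*ℏ)*δ/D2)*v + 1/(Complex.I*ℏ)*(2*(1-c)*u)/D2) * ϖbar u v) := by
      rw [e2]
      exact (hasDerivAt_linmul _ _ _ _ v (HYb u v)).deriv
    simp only [Lu]
    rw [d1, d2, hLvEq u v]
    linear_combination ((2*δ'/D2)*u + 2*(1-c)/D2*v) * hz + hsmall
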